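/- Let m be a natural number, let c : Fin m → ℝ be strictly increasing, and let ℓ ≤ u be real numbers. For x ∈ ℝ define the tie-broken ranking relation R_x on Fin m by: R_x i j holds iff |x − c i| < |x − c j|, or (|x − c i| = |x − c j| and i ≤ j). Then the set { R_x : x ∈ [ℓ, u] } of relations is finite and has at most m(m−1)/2 + 1 elements. -/

import Mathlib

private lemma abs_lt_iff_mid (a b x : ℝ) (hab : a < b) :
    |x - a| < |x - b| ↔ x < (a + b) / 2 := by
  rcases abs_cases (x - a) with ⟨h1, h2⟩ | ⟨h1, h2⟩ <;>
    rcases abs_cases (x - b) with ⟨h3, h4⟩ | ⟨h3, h4⟩ <;>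
    constructor <;> intro h <;> linarith

private lemma abs_eq_iff_mid (a b x : ℝ) (hab : a < b) :
    |x - a| = |x - b| ↔ x = (a + b) / 2 := by
  rcases abs_cases (x - a) with ⟨h1, h2⟩ | ⟨h1, h2⟩ <;>
    rcases abs_cases (x - b) with ⟨h3, h4⟩ | ⟨h3, h4⟩ <;>
    constructor <;> intro h <;> linarith

private lemma abs_le_iff_mid (a b x : ℝ) (hab : a < b) :
    |x - a| ≤ |x - b| ↔ x ≤ (a + b) / 2 := by
  rw [le_iff_lt_or_eq, le_iff_lt_or_eq, abs_lt_iff_mid a b x hab, abs_eq_iff_mid a b x hab]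

set_option maxHeartbeats 1000000 in
/-- Lemma 4.2: a one-dimensional partial spatial vote with interval `[ℓ, u]` has at most
`m(m-1)/2 + 1` ranking completions, where the (tie-broken) ranking relation induced by
position `x` ranks `i` before `j` iff `|x - c i| < |x - c j|`, or the distances are equal
and `i ≤ j`. -/
theorem one_dim_partial_vote_rankings_finite_card_le
    (m : ℕ) (c : Fin m → ℝ) (hc : StrictMono c) (ℓ u : ℝ) (hlu : ℓ ≤ u) :
    ({R : Fin m → Fin m → Prop | ∃ x ∈ Set.Icc ℓ u,
        R = fun i j => |x - c i| < |x - c j| ∨ (|x - c i| = |x - c j| ∧ i ≤ j)}).Finite ∧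
    ({R : Fin m → Fin m → Prop | ∃ x ∈ Set.Icc ℓ u,
        R = fun i j => |x - c i| < |x - c j| ∨ (|x - c i| = |x - c j| ∧ i ≤ j)}).ncard
      ≤ m * (m - 1) / 2 + 1 := by
  classical
  set g : ℝ → Fin m → Fin m → Prop := fun x i j =>
    |x - c i| < |x - c j| ∨ (|x - c i| = |x - c j| ∧ i ≤ j) with hg
  have hS : {R : Fin m → Fin m → Prop | ∃ x ∈ Set.Icc ℓ u,
      R = fun i j => |x - c i| < |x - c j| ∨ (|x - c i| = |x - c j| ∧ i ≤ j)}
      = g '' Set.Icc ℓ u := by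
    ext R
    simp only [Set.mem_setOf_eq, Set.mem_image]
    constructor
    · rintro ⟨x, hx, rfl⟩; exact ⟨x, hx, rfl⟩
    · rintro ⟨x, hx, rfl⟩; exact ⟨x, hx, rfl⟩
  set M : Finset ℝ :=
    (Finset.univ.filter (fun p : Fin m × Fin m => p.1 < p.2)).image
      (fun p => (c p.1 + c p.2) / 2) with hM
  have hmemM : ∀ i j : Fin m, i < j → (c i + c j) / 2 ∈ M := fun i j hij =>
    Finset.mem_image.2 ⟨(i, j), Finset.mem_filter.2 ⟨Finset.mem_univ _, hij⟩, rfl⟩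
  have glt : ∀ (x : ℝ) (i j : Fin m), i < j → (g x i j ↔ x ≤ (c i + c j) / 2) := by
    intro x i j hij
    have hc' := hc hij
    simp only [hg]
    rw [abs_lt_iff_mid _ _ _ hc', abs_eq_iff_mid _ _ _ hc']
    constructor
    · rintro (h | ⟨h, -⟩)
      exacts [le_of_lt h, le_of_eq h]
    · intro h
      rcases lt_or_eq_of_le h with h | h
      · exact Or.inl h
      · exact Or.inr ⟨h, le_of_lt hij⟩
  have ggt : ∀ (x : ℝ) (i j : Fin m), j < i → (g x i j ↔ ¬ x ≤ (c j + c i) / 2) := by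
    intro x i j hij
    have hc' := hc hij
    simp only [hg]
    constructor
    · rintro (h | ⟨-, h⟩)
      · rw [← abs_le_iff_mid _ _ _ hc', not_le]
        exact h
      · exact absurd h (not_le.2 hij)
    · intro h
      left
      rw [← abs_le_iff_mid _ _ _ hc', not_le] at h
      exact h
  set f : (Fin m → Fin m → Prop) → ℕ := fun R =>
    (M.filter (fun t => ∃ i j : Fin m, i < j ∧ (c i + c j) / 2 = t ∧ R i j)).card with hf
  have hfg : ∀ x : ℝ, f (g x) = (M.filter (fun t => x ≤ t)).card := by
    intro x
    simp only [hf]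
    refine congrArg Finset.card ?_
    ext t
    simp only [Finset.mem_filter]
    constructor
    · rintro ⟨ht, i, j, hij, rfl, hR⟩
      exact ⟨ht, (glt x i j hij).1 hR⟩
    · rintro ⟨ht, hxt⟩
      refine ⟨ht, ?_⟩
      rcases Finset.mem_image.1 ht with ⟨p, hp, rfl⟩
      rcases Finset.mem_filter.1 hp with ⟨-, hplt⟩
      exact ⟨p.1, p.2, hplt, rfl, (glt x _ _ hplt).2 hxt⟩
  have main : ∀ x y : ℝ, x ≤ y → f (g x) = f (g y) → g x = g y := by
    intro x y hle hfxy
    have hsub : M.filter (fun t => y ≤ t) ⊆ M.filter (fun t => x ≤ t) := by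
      intro t ht
      rcases Finset.mem_filter.1 ht with ⟨h1, h2⟩
      exact Finset.mem_filter.2 ⟨h1, hle.trans h2⟩
    have hcard : (M.filter (fun t => x ≤ t)).card ≤ (M.filter (fun t => y ≤ t)).card := by
      rw [← hfg, ← hfg, hfxy]
    have heq : M.filter (fun t => y ≤ t) = M.filter (fun t => x ≤ t) :=
      Finset.eq_of_subset_of_card_le hsub hcard
    have hiff : ∀ i j : Fin m, i < j → (x ≤ (c i + c j) / 2 ↔ y ≤ (c i + c j) / 2) := by
      intro i j hij
      have hm := hmemM i j hij
      constructor
      · intro hx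
        have : (c i + c j) / 2 ∈ M.filter (fun t => x ≤ t) := Finset.mem_filter.2 ⟨hm, hx⟩
        rw [← heq] at this
        exact (Finset.mem_filter.1 this).2
      · intro hy
        exact hle.trans hy
    funext i j
    rcases lt_trichotomy i j with hij | rfl | hij
    · exact propext (((glt x i j hij).trans (hiff i j hij)).trans (glt y i j hij).symm)
    · exact propext (iff_of_true (Or.inr ⟨rfl, le_refl i⟩) (Or.inr ⟨rfl, le_refl i⟩))
    · exact propext (((ggt x i j hij).trans (not_congr (hiff j i hij))).trans
        (ggt y i j hij).symm)
  have hinj : Set.InjOn f (g '' Set.Icc ℓ u) := by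
    rintro R1 ⟨x, -, rfl⟩ R2 ⟨y, -, rfl⟩ h
    rcases le_total x y with hle | hle
    · exact main x y hle h
    · exact (main y x hle h.symm).symm
  have hmaps : ∀ R ∈ g '' Set.Icc ℓ u, f R ∈ (↑(Finset.range (M.card + 1)) : Set ℕ) := by
    rintro R ⟨x, -, rfl⟩
    simp only [Finset.coe_range, Set.mem_Iio]
    have := hfg x
    rw [this]
    exact Nat.lt_succ_of_le (Finset.card_filter_le _ _)
  have hMcard : M.card ≤ m * (m - 1) / 2 := by
    have h1 : M.card ≤ (Finset.univ.filter (fun p : Fin m × Fin m => p.1 < p.2)).card :=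
      Finset.card_image_le
    have h2 : (Finset.univ.filter (fun p : Fin m × Fin m => p.1 < p.2)).card ≤
        ((Finset.univ : Finset (Fin m)).powersetCard 2).card := by
      apply Finset.card_le_card_of_injOn (fun p => {p.1, p.2})
      · intro p hp
        rcases Finset.mem_filter.1 hp with ⟨-, hlt⟩
        rw [Finset.mem_coe, Finset.mem_powersetCard]
        exact ⟨fun z _ => Finset.mem_univ z, Finset.card_pair (ne_of_lt hlt)⟩
      · intro p hp q hq h
        rcases Finset.mem_filter.1 hp with ⟨-, hp'⟩
        rcases Finset.mem_filter.1 hq with ⟨-, hq'⟩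
        have hb : ({p.1, p.2} : Finset (Fin m)) = {q.1, q.2} := h
        have h1' : p.1 = q.1 ∨ p.1 = q.2 := by
          have : p.1 ∈ ({p.1, p.2} : Finset (Fin m)) := by simp
          rw [hb] at this
          simpa using this
        have h2' : p.2 = q.1 ∨ p.2 = q.2 := by
          have : p.2 ∈ ({p.1, p.2} : Finset (Fin m)) := by simp
          rw [hb] at this
          simpa using this
        have hpq : p.1 = q.1 ∧ p.2 = q.2 := by
          rcases h1' with e1 | e1 <;> rcases h2' with e2 | e2
          · rw [e1, e2] at hp'
            exact absurd hp' (lt_irrefl _)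
          · exact ⟨e1, e2⟩
          · have hlt2 : q.2 < q.1 := by rw [← e1, ← e2]; exact hp'
            exact absurd (hq'.trans hlt2) (lt_irrefl _)
          · rw [e1, e2] at hp'
            exact absurd hp' (lt_irrefl _)
        exact Prod.ext hpq.1 hpq.2
    rw [Finset.card_powersetCard, Finset.card_univ, Fintype.card_fin,
      Nat.choose_two_right] at h2
    exact le_trans h1 h2
  have hfin : (g '' Set.Icc ℓ u).Finite := by
    apply Set.Finite.of_finite_image _ hinj
    apply Set.Finite.subset (Finset.finite_toSet (Finset.range (M.card + 1)))
    rintro n ⟨R, hR, rfl⟩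
    exact hmaps R hR
  constructor
  · rw [hS]; exact hfin
  · rw [hS]
    have hle := Set.ncard_le_ncard_of_injOn f hmaps hinj (Finset.finite_toSet _)
    rw [Set.ncard_coe_finset, Finset.card_range] at hle
    omega
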